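/- If every Θ6-graph on n points in general position has a matching of size at least (n−1)/2 (for all n), then β(n) ≥ n − 1 for all n, where β(n) is the minimum over all sets P of n points in general position of the minimum size of a blocking set of G⋆(P). -/

import Mathlib

noncomputable section

/-- Points in the plane. -/
abbrev Pt : Type := ℝ × ℝ

/-- `P` is in general position: no line through two points of `P` makes an angle of
0°, 60°, or 120° with the horizontal. -/
def GenPos (P : Finset Pt) : Prop :=
  ∀ p ∈ P, ∀ q ∈ P, p ≠ q →
    p.2 ≠ q.2 ∧
    q.2 - p.2 ≠ Real.sqrt 3 * (q.1 - p.1) ∧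
    q.2 - p.2 ≠ -Real.sqrt 3 * (q.1 - p.1)

/-- First cone coordinate (height). -/
def cA (z : Pt) : ℝ := z.2
/-- Second cone coordinate. -/
def cB (z : Pt) : ℝ := Real.sqrt 3 * z.1 + z.2
/-- Third cone coordinate. -/
def cC (z : Pt) : ℝ := -Real.sqrt 3 * z.1 + z.2

/-- The smallest upward equilateral triangle (horizontal bottom side) having both
`p` and `q` on its boundary, as a closed set. -/
def upTri (p q : Pt) : Set Pt :=
  {x | min (cA p) (cA q) ≤ cA x ∧ cB x ≤ max (cB p) (cB q) ∧ cC x ≤ max (cC p) (cC q)}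

/-- The interior of `upTri p q`. -/
def upTriInt (p q : Pt) : Set Pt :=
  {x | min (cA p) (cA q) < cA x ∧ cB x < max (cB p) (cB q) ∧ cC x < max (cC p) (cC q)}

/-- The smallest downward equilateral triangle (horizontal top side) having both
`p` and `q` on its boundary, as a closed set. -/
def downTri (p q : Pt) : Set Pt :=
  {x | cA x ≤ max (cA p) (cA q) ∧ min (cB p) (cB q) ≤ cB x ∧ min (cC p) (cC q) ≤ cC x}

/-- The interior of `downTri p q`. -/
def downTriInt (p q : Pt) : Set Pt :=
  {x | cA x < max (cA p) (cA q) ∧ min (cB p) (cB q) < cB x ∧ min (cC p) (cC q) < cC x}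

lemma upTriInt_comm (p q : Pt) : upTriInt p q = upTriInt q p := by
  ext x
  simp only [upTriInt, Set.mem_setOf_eq]
  rw [min_comm (cA p) (cA q), max_comm (cB p) (cB q), max_comm (cC p) (cC q)]

lemma downTriInt_comm (p q : Pt) : downTriInt p q = downTriInt q p := by
  ext x
  simp only [downTriInt, Set.mem_setOf_eq]
  rw [max_comm (cA p) (cA q), min_comm (cB p) (cB q), min_comm (cC p) (cC q)]

/-- `upTri p q` is empty with respect to `P`: its interior contains no point of `P`. -/
def EmptyUp (P : Finset Pt) (p q : Pt) : Prop := ∀ r ∈ P, r ∉ upTriInt p q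

/-- `downTri p q` is empty with respect to `P`: its interior contains no point of `P`. -/
def EmptyDown (P : Finset Pt) (p q : Pt) : Prop := ∀ r ∈ P, r ∉ downTriInt p q

/-- The Θ₆-graph `G⋆(P)`: vertices are the points of `P`, and `p` is adjacent to `q`
iff `△(p,q)` or `▽(p,q)` is empty with respect to `P`. -/
def theta6 (P : Finset Pt) : SimpleGraph {x // x ∈ P} where
  Adj p q := p ≠ q ∧ (EmptyUp P p.1 q.1 ∨ EmptyDown P p.1 q.1)
  symm := by
    constructor
    rintro p q ⟨hne, h⟩
    refine ⟨hne.symm, ?_⟩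
    unfold EmptyUp EmptyDown at h ⊢
    rcases h with h | h
    · exact Or.inl (by rw [upTriInt_comm]; exact h)
    · exact Or.inr (by rw [downTriInt_comm]; exact h)
  loopless := ⟨fun p h => h.1 rfl⟩

/-- `B` blocks `G⋆(P)`: every empty triangle introducing an edge of `G⋆(P)` contains a
point of `B` in its interior. -/
def Blocks (P B : Finset Pt) : Prop :=
  ∀ p ∈ P, ∀ q ∈ P, p ≠ q →
    (EmptyUp P p q → ∃ b ∈ B, b ∈ upTriInt p q) ∧
    (EmptyDown P p q → ∃ b ∈ B, b ∈ downTriInt p q)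

/-- `betaMin n`: the minimum, over sets `P` of `n` points in general position, of the
minimum size of a blocking set of `G⋆(P)`. -/
def betaMin (n : ℕ) : ℕ :=
  sInf {k | ∃ P B : Finset Pt, P.card = n ∧ GenPos P ∧ Blocks P B ∧ B.card = k}

/-- An (up or down) triangle described by two points and an orientation flag:
its interior. -/
def triIntr (t : Pt × Pt × Bool) : Set Pt :=
  if t.2.2 then upTriInt t.1 t.2.1 else downTriInt t.1 t.2.1

/-- An (up or down) triangle described by two points and an orientation flag:
the closed triangle. -/
def triCl (t : Pt × Pt × Bool) : Set Pt :=
  if t.2.2 then upTri t.1 t.2.1 else downTri t.1 t.2.1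

/-- `t` describes an empty triangle of `P` (one that introduces an edge of `G⋆(P)`). -/
def IsEmptyTriOf (P : Finset Pt) (t : Pt × Pt × Bool) : Prop :=
  t.1 ∈ P ∧ t.2.1 ∈ P ∧ t.1 ≠ t.2.1 ∧ ∀ r ∈ P, r ∉ triIntr t

/-! ### Auxiliary lemmas -/

lemma sqrt3_gt_one : (1 : ℝ) < Real.sqrt 3 := by
  have h := Real.sqrt_lt_sqrt (le_refl (0:ℝ) |>.trans (by norm_num : (0:ℝ) ≤ 1)) (by norm_num : (1:ℝ) < 3)
  simpa using h

lemma sqrt3_pos : (0 : ℝ) < Real.sqrt 3 := lt_trans one_pos sqrt3_gt_one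

/-- Pair condition of general position. -/
def GoodPair (p q : Pt) : Prop :=
  p.2 ≠ q.2 ∧ q.2 - p.2 ≠ Real.sqrt 3 * (q.1 - p.1) ∧ q.2 - p.2 ≠ -Real.sqrt 3 * (q.1 - p.1)

lemma GoodPair.symm {p q : Pt} (h : GoodPair p q) : GoodPair q p := by
  obtain ⟨h1, h2, h3⟩ := h
  refine ⟨h1.symm, fun he => h2 ?_, fun he => h3 ?_⟩ <;> linarith

lemma GoodPair.ne {p q : Pt} (h : GoodPair p q) : p ≠ q := fun he => h.1 (by rw [he])

/-- Generic point choice: in any open set we can find a point in `GoodPair`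
position with respect to every point of a given finite set. -/
lemma exists_generic (S : Finset Pt) (U : Set Pt) (hU : IsOpen U) (b : Pt) (hb : b ∈ U) :
    ∃ b' ∈ U, ∀ s ∈ S, GoodPair s b' := by
  classical
  obtain ⟨ε, hε, hball⟩ := Metric.isOpen_iff.mp hU b hb
  have h3 : (1 : ℝ) < Real.sqrt 3 := sqrt3_gt_one
  set s3 : ℝ := Real.sqrt 3 with hs3
  set Bad : Finset ℝ := S.biUnion (fun s =>
    {s.2 - b.2, (s3 * (b.1 - s.1) - (b.2 - s.2)) / (1 - s3),
      (-s3 * (b.1 - s.1) - (b.2 - s.2)) / (1 + s3)}) with hBad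
  have hinf : (Set.Ioo (0:ℝ) ε).Infinite := Set.Ioo_infinite hε
  obtain ⟨t, htI, htB⟩ := (hinf.diff Bad.finite_toSet).nonempty
  have ht0 : 0 < t := htI.1
  have htε : t < ε := htI.2
  have hnotbad : ∀ s ∈ S, ∀ x ∈ ({s.2 - b.2, (s3 * (b.1 - s.1) - (b.2 - s.2)) / (1 - s3),
      (-s3 * (b.1 - s.1) - (b.2 - s.2)) / (1 + s3)} : Finset ℝ), t ≠ x := by
    intro s hs x hx he
    exact htB (by
      subst he
      exact Finset.mem_coe.mpr (Finset.mem_biUnion.mpr ⟨s, hs, hx⟩))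
  refine ⟨(b.1 + t, b.2 + t), ?_, ?_⟩
  · apply hball
    rw [Metric.mem_ball, Prod.dist_eq]
    have : dist (b.1 + t) b.1 = t := by
      rw [Real.dist_eq, abs_of_pos (by linarith : (0:ℝ) < b.1 + t - b.1)]; ring
    have h2 : dist (b.2 + t) b.2 = t := by
      rw [Real.dist_eq, abs_of_pos (by linarith : (0:ℝ) < b.2 + t - b.2)]; ring
    rw [this, h2, max_self]; exact htε
  · intro s hs
    have hb1 : t ≠ s.2 - b.2 := hnotbad s hs _ (by simp)
    have hb2 : t ≠ (s3 * (b.1 - s.1) - (b.2 - s.2)) / (1 - s3) := hnotbad s hs _ (by simp)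
    have hb3 : t ≠ (-s3 * (b.1 - s.1) - (b.2 - s.2)) / (1 + s3) := hnotbad s hs _ (by simp)
    have hne1 : (1 : ℝ) - s3 ≠ 0 := by rw [hs3]; intro h; nlinarith
    have hne2 : (1 : ℝ) + s3 ≠ 0 := by rw [hs3]; intro h; nlinarith
    refine ⟨fun he => hb1 (by simp only at he; linarith), fun he => ?_, fun he => ?_⟩
    · apply hb2
      rw [eq_div_iff hne1]
      simp only at he
      linear_combination he
    · apply hb3
      rw [eq_div_iff hne2]
      simp only at he
      linear_combination he

lemma isOpen_upTriInt (p q : Pt) : IsOpen (upTriInt p q) := by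
  have hA : Continuous cA := by unfold cA; fun_prop
  have hB : Continuous cB := by unfold cB; fun_prop
  have hC : Continuous cC := by unfold cC; fun_prop
  have hEq : upTriInt p q = {x | min (cA p) (cA q) < cA x} ∩
      ({x : Pt | cB x < max (cB p) (cB q)} ∩ {x : Pt | cC x < max (cC p) (cC q)}) := by
    ext x; simp [upTriInt, Set.mem_setOf_eq, and_assoc]
  rw [hEq]
  exact (isOpen_lt continuous_const hA).inter
    ((isOpen_lt hB continuous_const).inter (isOpen_lt hC continuous_const))

lemma isOpen_downTriInt (p q : Pt) : IsOpen (downTriInt p q) := by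
  have hA : Continuous cA := by unfold cA; fun_prop
  have hB : Continuous cB := by unfold cB; fun_prop
  have hC : Continuous cC := by unfold cC; fun_prop
  have hEq : downTriInt p q = {x | cA x < max (cA p) (cA q)} ∩
      ({x : Pt | min (cB p) (cB q) < cB x} ∩ {x : Pt | min (cC p) (cC q) < cC x}) := by
    ext x; simp [downTriInt, Set.mem_setOf_eq, and_assoc]
  rw [hEq]
  exact (isOpen_lt hA continuous_const).inter
    ((isOpen_lt continuous_const hB).inter (isOpen_lt continuous_const hC))

lemma upTriInt_nonempty {p q : Pt} (h : p.2 ≠ q.2) : (upTriInt p q).Nonempty := by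
  have hs : (0:ℝ) < Real.sqrt 3 := sqrt3_pos
  set m := min (cA p) (cA q) with hm
  set Bm := max (cB p) (cB q) with hBm
  set Cm := max (cC p) (cC q) with hCm
  have e1 : cB p + cC p = 2 * cA p := by unfold cA cB cC; ring
  have e2 : cB q + cC q = 2 * cA q := by unfold cA cB cC; ring
  have hA : cA p ≠ cA q := h
  have hmm : m < max (cA p) (cA q) := min_lt_max.mpr hA
  have hsum : 2 * m < Bm + Cm := by
    rcases max_cases (cA p) (cA q) with ⟨he, _⟩ | ⟨he, _⟩ <;>
      [ (have := le_max_left (cB p) (cB q) ; have := le_max_left (cC p) (cC q)) ;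
        (have := le_max_right (cB p) (cB q) ; have := le_max_right (cC p) (cC q))] <;>
      linarith
  set δ := (Bm + Cm - 2 * m) / 4 with hδ
  have hδpos : 0 < δ := by rw [hδ]; linarith
  have hx1 : Real.sqrt 3 * ((Bm - Cm) / (2 * Real.sqrt 3)) = (Bm - Cm) / 2 := by
    field_simp
  refine ⟨((Bm - Cm) / (2 * Real.sqrt 3), (Bm + Cm) / 2 - δ), ?_, ?_, ?_⟩
  · show m < cA _
    unfold cA
    simp only
    rw [hδ]; linarith
  · show cB _ < Bm
    unfold cB
    simp only
    rw [hx1]; linarith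
  · show cC _ < Cm
    unfold cC
    simp only
    have : -Real.sqrt 3 * ((Bm - Cm) / (2 * Real.sqrt 3)) = -((Bm - Cm) / 2) := by
      field_simp
    rw [this]; linarith

lemma downTriInt_nonempty {p q : Pt} (h : p.2 ≠ q.2) : (downTriInt p q).Nonempty := by
  have hs : (0:ℝ) < Real.sqrt 3 := sqrt3_pos
  set M := max (cA p) (cA q) with hM
  set Bm := min (cB p) (cB q) with hBm
  set Cm := min (cC p) (cC q) with hCm
  have e1 : cB p + cC p = 2 * cA p := by unfold cA cB cC; ring
  have e2 : cB q + cC q = 2 * cA q := by unfold cA cB cC; ring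
  have hA : cA p ≠ cA q := h
  have hmm : min (cA p) (cA q) < M := min_lt_max.mpr hA
  have hsum : Bm + Cm < 2 * M := by
    rcases min_cases (cA p) (cA q) with ⟨he, _⟩ | ⟨he, _⟩ <;>
      [ (have := min_le_left (cB p) (cB q) ; have := min_le_left (cC p) (cC q)) ;
        (have := min_le_right (cB p) (cB q) ; have := min_le_right (cC p) (cC q))] <;>
      linarith
  set δ := (2 * M - (Bm + Cm)) / 4 with hδ
  have hδpos : 0 < δ := by rw [hδ]; linarith
  have hx1 : Real.sqrt 3 * ((Bm - Cm) / (2 * Real.sqrt 3)) = (Bm - Cm) / 2 := by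
    field_simp
  refine ⟨((Bm - Cm) / (2 * Real.sqrt 3), (Bm + Cm) / 2 + δ), ?_, ?_, ?_⟩
  · show cA _ < M
    unfold cA
    simp only
    rw [hδ]; linarith
  · show Bm < cB _
    unfold cB
    simp only
    rw [hx1]; linarith
  · show Cm < cC _
    unfold cC
    simp only
    have : -Real.sqrt 3 * ((Bm - Cm) / (2 * Real.sqrt 3)) = -((Bm - Cm) / 2) := by
      field_simp
    rw [this]; linarith

open Classical in
/-- A chosen point in the interior of an up triangle. -/
noncomputable def pickU (p q : Pt) : Pt :=
  if h : (upTriInt p q).Nonempty then h.choose else (0, 0)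

open Classical in
/-- A chosen point in the interior of a down triangle. -/
noncomputable def pickD (p q : Pt) : Pt :=
  if h : (downTriInt p q).Nonempty then h.choose else (0, 0)

lemma pickU_mem {p q : Pt} (h : (upTriInt p q).Nonempty) : pickU p q ∈ upTriInt p q := by
  rw [pickU, dif_pos h]; exact h.choose_spec

lemma pickD_mem {p q : Pt} (h : (downTriInt p q).Nonempty) : pickD p q ∈ downTriInt p q := by
  rw [pickD, dif_pos h]; exact h.choose_spec

lemma betaSet_nonempty (n : ℕ) :
    {k | ∃ P B : Finset Pt, P.card = n ∧ GenPos P ∧ Blocks P B ∧ B.card = k}.Nonempty := by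
  classical
  set P : Finset Pt := (Finset.range n).image (fun i : ℕ => ((i : ℝ), (i : ℝ) / 2)) with hP
  have hcard : P.card = n := by
    rw [hP, Finset.card_image_of_injOn, Finset.card_range]
    intro i _ j _ hij
    have : (i : ℝ) = (j : ℝ) := congrArg Prod.fst hij
    exact_mod_cast this
  have hform : ∀ p ∈ P, ∃ i : ℕ, p = ((i : ℝ), (i : ℝ) / 2) := by
    intro p hp
    rw [hP, Finset.mem_image] at hp
    obtain ⟨i, _, hi⟩ := hp
    exact ⟨i, hi.symm⟩
  have hgen : GenPos P := by
    intro p hp q hq hne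
    obtain ⟨i, rfl⟩ := hform p hp
    obtain ⟨j, rfl⟩ := hform q hq
    have hij : (i : ℝ) ≠ (j : ℝ) := by
      intro h
      exact hne (by rw [h])
    have hji : (j : ℝ) - (i : ℝ) ≠ 0 := sub_ne_zero.mpr (fun h => hij h.symm)
    have h3 := sqrt3_gt_one
    refine ⟨?_, ?_, ?_⟩
    · simp only
      intro h
      exact hij (by linarith)
    · simp only
      intro h
      have hz : ((j : ℝ) - i) * (1 / 2 - Real.sqrt 3) = 0 := by linear_combination h
      rcases mul_eq_zero.mp hz with h' | h'
      · exact hji h'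
      · nlinarith
    · simp only
      intro h
      have hz : ((j : ℝ) - i) * (1 / 2 + Real.sqrt 3) = 0 := by linear_combination h
      rcases mul_eq_zero.mp hz with h' | h'
      · exact hji h'
      · nlinarith
  set B : Finset Pt := ((P ×ˢ P).image (fun z => pickU z.1 z.2)) ∪
      ((P ×ˢ P).image (fun z => pickD z.1 z.2)) with hB
  have hblocks : Blocks P B := by
    intro p hp q hq hne
    have hy : p.2 ≠ q.2 := (hgen p hp q hq hne).1
    constructor
    · intro _
      refine ⟨pickU p q, ?_, pickU_mem (upTriInt_nonempty hy)⟩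
      exact Finset.mem_union_left _ (Finset.mem_image.mpr
        ⟨(p, q), Finset.mem_product.mpr ⟨hp, hq⟩, rfl⟩)
    · intro _
      refine ⟨pickD p q, ?_, pickD_mem (downTriInt_nonempty hy)⟩
      exact Finset.mem_union_right _ (Finset.mem_image.mpr
        ⟨(p, q), Finset.mem_product.mpr ⟨hp, hq⟩, rfl⟩)
  exact ⟨B.card, P, B, hcard, hgen, hblocks, rfl⟩

open Classical in
/-- The intersection of the interiors of all relevant triangles (over pairs from `P`)
that contain `b`. -/
def blockSet (P : Finset Pt) (b : Pt) : Set Pt :=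
  ⋂ p ∈ (P : Set Pt), ⋂ q ∈ (P : Set Pt),
    ((if b ∈ upTriInt p q then upTriInt p q else Set.univ) ∩
      (if b ∈ downTriInt p q then downTriInt p q else Set.univ))

lemma isOpen_blockSet (P : Finset Pt) (b : Pt) : IsOpen (blockSet P b) := by
  apply Set.Finite.isOpen_biInter P.finite_toSet
  intro p _
  apply Set.Finite.isOpen_biInter P.finite_toSet
  intro q _
  apply IsOpen.inter <;> split <;>
    first
      | exact isOpen_upTriInt _ _
      | exact isOpen_downTriInt _ _
      | exact isOpen_univ

lemma mem_blockSet_self (P : Finset Pt) (b : Pt) : b ∈ blockSet P b := by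
  simp only [blockSet, Set.mem_iInter, Set.mem_inter_iff]
  intro p _ q _
  constructor <;> split <;> simp_all

lemma blockSet_spec {P : Finset Pt} {b x p q : Pt} (hx : x ∈ blockSet P b)
    (hp : p ∈ P) (hq : q ∈ P) :
    (b ∈ upTriInt p q → x ∈ upTriInt p q) ∧ (b ∈ downTriInt p q → x ∈ downTriInt p q) := by
  simp only [blockSet, Set.mem_iInter, Set.mem_inter_iff] at hx
  have h := hx p (Finset.mem_coe.mpr hp) q (Finset.mem_coe.mpr hq)
  constructor
  · intro hb
    have h1 := h.1
    rwa [if_pos hb] at h1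
  · intro hb
    have h2 := h.2
    rwa [if_pos hb] at h2

/-- Perturb a blocking set into general position w.r.t. `P` and itself, keeping the
blocking structure (each original blocker has a perturbed copy inside the same
relevant open triangle interiors). -/
lemma exists_perturb (P : Finset Pt) (B : Finset Pt) :
    ∃ B' : Finset Pt, B'.card ≤ B.card ∧
      (∀ x ∈ B', ∀ s ∈ P, GoodPair s x) ∧
      (∀ x ∈ B', ∀ y ∈ B', x ≠ y → GoodPair x y) ∧
      (∀ b ∈ B, ∃ x ∈ B', x ∈ blockSet P b) := by
  classical
  induction B using Finset.induction with
  | empty =>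
      refine ⟨∅, le_refl _, ?_, ?_, ?_⟩ <;> simp
  | @insert a B₀ hb ih =>
      obtain ⟨B', hc, hPgood, hpair, hcov⟩ := ih
      obtain ⟨x, hxU, hxgood⟩ := exists_generic (P ∪ B') (blockSet P a)
        (isOpen_blockSet P a) a (mem_blockSet_self P a)
      refine ⟨insert x B', ?_, ?_, ?_, ?_⟩
      · calc (insert x B').card ≤ B'.card + 1 := Finset.card_insert_le _ _
          _ ≤ B₀.card + 1 := by omega
          _ = (insert a B₀).card := (Finset.card_insert_of_notMem hb).symm
      · intro y hy s hs
        rcases Finset.mem_insert.mp hy with rfl | hy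
        · exact hxgood s (Finset.mem_union_left _ hs)
        · exact hPgood y hy s hs
      · intro y hy z hz hyz
        rcases Finset.mem_insert.mp hy with h1 | h1
        · rcases Finset.mem_insert.mp hz with h2 | h2
          · exact absurd (h1.trans h2.symm) hyz
          · subst h1
            exact (hxgood z (Finset.mem_union_right _ h2)).symm
        · rcases Finset.mem_insert.mp hz with h2 | h2
          · subst h2
            exact hxgood y (Finset.mem_union_right _ h1)
          · exact hpair y h1 z h2 hyz
      · intro b hbm
        rcases Finset.mem_insert.mp hbm with rfl | hbm
        · exact ⟨x, Finset.mem_insert_self _ _, hxU⟩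
        · obtain ⟨y, hy, hyU⟩ := hcov b hbm
          exact ⟨y, Finset.mem_insert_of_mem hy, hyU⟩

/-- The key counting bound. -/
lemma key_bound
    (hmu : ∀ P : Finset Pt, GenPos P →
      ∃ M : (theta6 P).Subgraph, M.IsMatching ∧
        ((P.card : ℝ) - 1) / 2 ≤ (M.edgeSet.ncard : ℝ))
    {n : ℕ} (P B : Finset Pt) (hcard : P.card = n) (hgen : GenPos P)
    (hbl : Blocks P B) : (n : ℝ) - 1 ≤ (B.card : ℝ) := by
  classical
  obtain ⟨B', hc, hBP, hpair, hcov⟩ := exists_perturb P B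
  have hdisj : Disjoint P B' := by
    rw [Finset.disjoint_right]
    intro x hx hxP
    exact (hBP x hx x hxP).ne rfl
  set Q := P ∪ B' with hQ
  have hPQ : ∀ p ∈ P, p ∈ Q := fun p hp => Finset.mem_union_left _ hp
  have hgenQ : GenPos Q := by
    intro p hp q hq hne
    rcases Finset.mem_union.mp hp with hp' | hp' <;>
      rcases Finset.mem_union.mp hq with hq' | hq'
    · exact hgen p hp' q hq' hne
    · exact hBP q hq' p hp'
    · exact (hBP p hp' q hq').symm
    · exact hpair p hp' q hq' hne
  have hcardQ : Q.card = n + B'.card := by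
    rw [hQ, Finset.card_union_of_disjoint hdisj, hcard]
  obtain ⟨M, hM, hsize⟩ := hmu Q hgenQ
  -- every matching edge has an endpoint in B'
  have hend : ∀ u v : {x // x ∈ Q}, M.Adj u v → u.1 ∈ B' ∨ v.1 ∈ B' := by
    intro u v huv
    by_contra hcon
    push_neg at hcon
    obtain ⟨hu, hv⟩ := hcon
    have huP : u.1 ∈ P := (Finset.mem_union.mp u.2).resolve_right hu
    have hvP : v.1 ∈ P := (Finset.mem_union.mp v.2).resolve_right hv
    obtain ⟨hne, hempty⟩ : u ≠ v ∧ (EmptyUp Q u.1 v.1 ∨ EmptyDown Q u.1 v.1) := M.adj_sub huv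
    have hne' : u.1 ≠ v.1 := fun h => hne (Subtype.ext h)
    rcases hempty with he | he
    · have heP : EmptyUp P u.1 v.1 := fun r hr => he r (hPQ r hr)
      obtain ⟨bb, hbb, hbbin⟩ := (hbl u.1 huP v.1 hvP hne').1 heP
      obtain ⟨x, hxB', hxU⟩ := hcov bb hbb
      exact he x (Finset.mem_union_right _ hxB') ((blockSet_spec hxU huP hvP).1 hbbin)
    · have heP : EmptyDown P u.1 v.1 := fun r hr => he r (hPQ r hr)
      obtain ⟨bb, hbb, hbbin⟩ := (hbl u.1 huP v.1 hvP hne').2 heP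
      obtain ⟨x, hxB', hxU⟩ := hcov bb hbb
      exact he x (Finset.mem_union_right _ hxB') ((blockSet_spec hxU huP hvP).2 hbbin)
  have hex : ∀ e ∈ M.edgeSet, ∃ v : {x // x ∈ Q}, v ∈ e ∧ v.1 ∈ B' := by
    intro e
    refine Sym2.inductionOn e ?_
    intro u v he
    rw [SimpleGraph.Subgraph.mem_edgeSet] at he
    rcases hend u v he with h | h
    · exact ⟨u, Sym2.mem_mk_left _ _, h⟩
    · exact ⟨v, Sym2.mem_mk_right _ _, h⟩
  set f : Sym2 {x // x ∈ Q} → Pt := fun e =>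
    if h : ∃ v : {x // x ∈ Q}, v ∈ e ∧ v.1 ∈ B' then h.choose.1 else (0, 0) with hf
  have hfspec : ∀ e ∈ M.edgeSet, f e ∈ B' ∧ ∃ v : {x // x ∈ Q}, v ∈ e ∧ v.1 = f e := by
    intro e he
    have h := hex e he
    rw [hf]
    simp only
    rw [dif_pos h]
    exact ⟨h.choose_spec.2, h.choose, h.choose_spec.1, rfl⟩
  have hinj : Set.InjOn f M.edgeSet := by
    intro e1 he1 e2 he2 hfe
    obtain ⟨_, v1, hv1, hv1e⟩ := hfspec e1 he1
    obtain ⟨_, v2, hv2, hv2e⟩ := hfspec e2 he2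
    have hv12 : v1 = v2 := Subtype.ext (by rw [hv1e, hv2e, hfe])
    subst hv12
    obtain ⟨w1, rfl⟩ := Sym2.mem_iff_exists.mp hv1
    obtain ⟨w2, rfl⟩ := Sym2.mem_iff_exists.mp hv2
    rw [SimpleGraph.Subgraph.mem_edgeSet] at he1 he2
    have hv1V : v1 ∈ M.verts := M.edge_vert he1
    obtain ⟨w, _, hw⟩ := hM hv1V
    rw [hw w1 he1, hw w2 he2]
  have hcount : (M.edgeSet.ncard : ℝ) ≤ (B'.card : ℝ) := by
    have h1 : M.edgeSet.ncard = (f '' M.edgeSet).ncard :=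
      (Set.ncard_image_of_injOn hinj).symm
    have hsub : f '' M.edgeSet ⊆ (B' : Set Pt) := by
      rintro _ ⟨e, he, rfl⟩
      exact (hfspec e he).1
    have h2 : (f '' M.edgeSet).ncard ≤ (B' : Set Pt).ncard :=
      Set.ncard_le_ncard hsub B'.finite_toSet
    rw [Set.ncard_coe_finset] at h2
    exact_mod_cast h1 ▸ h2
  have hQc : (Q.card : ℝ) = (n : ℝ) + (B'.card : ℝ) := by
    rw [hcardQ]; push_cast; ring
  have hc' : (B'.card : ℝ) ≤ (B.card : ℝ) := by exact_mod_cast hc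
  rw [hQc] at hsize
  linarith

/-- If every Θ₆-graph on `n` points in general position has a matching of size at least
`(n−1)/2`, then `β(n) ≥ n − 1` for all `n`. -/
theorem beta_of_near_perfect_matching
    (hmu : ∀ P : Finset Pt, GenPos P →
      ∃ M : (theta6 P).Subgraph, M.IsMatching ∧
        ((P.card : ℝ) - 1) / 2 ≤ (M.edgeSet.ncard : ℝ)) :
    ∀ n : ℕ, (n : ℝ) - 1 ≤ (betaMin n : ℝ) := by
  intro n
  obtain ⟨P, B, hcard, hgen, hbl, hB⟩ := Nat.sInf_mem (betaSet_nonempty n)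
  have hkey := key_bound hmu P B hcard hgen hbl
  calc (n : ℝ) - 1 ≤ (B.card : ℝ) := hkey
    _ = (betaMin n : ℝ) := by rw [betaMin, hB]
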